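/- For r > 0 and ν ∈ {0,1,2} define K_ν(r) := ∫₀^∞ e^{−r cosh t} cosh(ν t) dt. Then for every r > 0 one has K₁(r)² − (1/2) K₂(r) K₀(r) − (1/2) K₀(r)² < 0, and consequently the function r ↦ K₁(r)/K₀(r) is strictly decreasing on (0,∞). In particular, for a > u_f the far-field slope function p_out(r) := (a − u_f) K₁(r)/K₀(r) satisfies p_out'(r) < 0 for all r > 0. -/

import Mathlib

open Real MeasureTheory Set Filter

noncomputable def besselK (ν : ℝ) (r : ℝ) : ℝ :=
  ∫ t in Set.Ioi (0:ℝ), Real.exp (-r * Real.cosh t) * Real.cosh (ν * t)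

lemma my_cosh_le_exp {t : ℝ} (ht : 0 ≤ t) : Real.cosh t ≤ Real.exp t := by
  rw [Real.cosh_eq]
  have h1 : Real.exp (-t) ≤ Real.exp t := Real.exp_le_exp.2 (by linarith)
  linarith

lemma my_sq_le_cosh {t : ℝ} (ht : 0 ≤ t) : t ^ 2 / 8 ≤ Real.cosh t := by
  have h1 : 1 + t / 2 ≤ Real.exp (t / 2) := by have := Real.add_one_le_exp (t / 2); linarith
  have h2 : (1 + t / 2) ^ 2 ≤ Real.exp (t / 2) ^ 2 := by
    apply pow_le_pow_left₀ (by linarith) h1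
  have h3 : Real.exp (t / 2) ^ 2 = Real.exp t := by
    rw [sq, ← Real.exp_add]; ring_nf
  have h4 : Real.exp t / 2 ≤ Real.cosh t := by
    rw [Real.cosh_eq]
    have := (Real.exp_pos (-t)).le
    linarith
  nlinarith

lemma integrableOn_exp_aux {r : ℝ} (hr : 0 < r) (m : ℝ) :
    IntegrableOn (fun t => Real.exp (-r * Real.cosh t + m * t)) (Ioi (0:ℝ)) := by
  have hg : IntegrableOn (fun t => Real.exp (2 * (m + 1) ^ 2 / r) * Real.exp (-1 * t))
      (Ioi (0:ℝ)) := (exp_neg_integrableOn_Ioi 0 one_pos).const_mul _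
  refine Integrable.mono' hg ?_ ?_
  · exact (Continuous.aestronglyMeasurable (by continuity))
  · rw [ae_restrict_iff' measurableSet_Ioi]
    filter_upwards with t ht
    rw [norm_of_nonneg (Real.exp_pos _).le, ← Real.exp_add]
    apply Real.exp_le_exp.2
    have hc := mul_le_mul_of_nonneg_left (my_sq_le_cosh (le_of_lt ht)) hr.le
    have key : (m + 1) * t - r * (t ^ 2 / 8) ≤ 2 * (m + 1) ^ 2 / r := by
      rw [le_div_iff₀ hr]; nlinarith [sq_nonneg (r * t - 4 * (m + 1))]
    linarith

lemma cosh_mul_le {ν t : ℝ} (hν : 0 ≤ ν) (ht : 0 ≤ t) : Real.cosh (ν * t) ≤ Real.exp (ν * t) :=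
  my_cosh_le_exp (mul_nonneg hν ht)

lemma integrableOn_besselK {ν r : ℝ} (hν : 0 ≤ ν) (hr : 0 < r) :
    IntegrableOn (fun t => Real.exp (-r * Real.cosh t) * Real.cosh (ν * t)) (Ioi (0:ℝ)) := by
  refine Integrable.mono' (integrableOn_exp_aux hr ν) ?_ ?_
  · exact (Continuous.aestronglyMeasurable (by continuity))
  · rw [ae_restrict_iff' measurableSet_Ioi]
    filter_upwards with t ht
    have h1 : (0:ℝ) < Real.cosh (ν * t) := Real.cosh_pos _
    rw [norm_of_nonneg (by positivity), Real.exp_add]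
    exact mul_le_mul_of_nonneg_left (cosh_mul_le hν ht.le) (Real.exp_pos _).le

lemma integrableOn_besselK_deriv {ν r : ℝ} (hν : 0 ≤ ν) (hr : 0 < r) :
    IntegrableOn (fun t => Real.cosh t * (Real.exp (-r * Real.cosh t) * Real.cosh (ν * t)))
      (Ioi (0:ℝ)) := by
  refine Integrable.mono' (integrableOn_exp_aux hr (ν + 1)) ?_ ?_
  · exact (Continuous.aestronglyMeasurable (by continuity))
  · rw [ae_restrict_iff' measurableSet_Ioi]
    filter_upwards with t ht
    have h1 : (0:ℝ) < Real.cosh (ν * t) := Real.cosh_pos _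
    have h2 : (0:ℝ) < Real.cosh t := Real.cosh_pos _
    rw [norm_of_nonneg (by positivity)]
    have e1 : Real.cosh t ≤ Real.exp t := my_cosh_le_exp ht.le
    have e2 : Real.cosh (ν * t) ≤ Real.exp (ν * t) := cosh_mul_le hν ht.le
    calc Real.cosh t * (Real.exp (-r * Real.cosh t) * Real.cosh (ν * t))
        ≤ Real.exp t * (Real.exp (-r * Real.cosh t) * Real.exp (ν * t)) := by
          apply mul_le_mul e1 (mul_le_mul_of_nonneg_left e2 (Real.exp_pos _).le) (by positivity)
            (Real.exp_pos _).le
      _ = Real.exp (-r * Real.cosh t + (ν + 1) * t) := by rw [← Real.exp_add, ← Real.exp_add]; ring_nf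

lemma besselK_hasDerivAt {ν r : ℝ} (hν : 0 ≤ ν) (hr : 0 < r) :
    HasDerivAt (besselK ν)
      (∫ t in Set.Ioi (0:ℝ),
        -(Real.cosh t * (Real.exp (-r * Real.cosh t) * Real.cosh (ν * t)))) r := by
  have main := hasDerivAt_integral_of_dominated_loc_of_deriv_le
    (μ := volume.restrict (Ioi (0:ℝ))) (x₀ := r)
    (F := fun x t => Real.exp (-x * Real.cosh t) * Real.cosh (ν * t))
    (F' := fun x t => -(Real.cosh t * (Real.exp (-x * Real.cosh t) * Real.cosh (ν * t))))
    (bound := fun t => Real.exp (-(r / 2) * Real.cosh t + (ν + 1) * t))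
    (Metric.ball_mem_nhds r (half_pos hr))
    (by filter_upwards with x using Continuous.aestronglyMeasurable (by continuity))
    (integrableOn_besselK hν hr)
    (Continuous.aestronglyMeasurable (by continuity))
    ?_ (integrableOn_exp_aux (half_pos hr) (ν + 1)) ?_
  · exact main.2
  · rw [ae_restrict_iff' measurableSet_Ioi]
    filter_upwards with t ht x hx
    rw [Metric.mem_ball, Real.dist_eq, abs_lt] at hx
    have hx2 : r / 2 < x := by linarith
    have h1 : (0:ℝ) < Real.cosh (ν * t) := Real.cosh_pos _
    have h2 : (0:ℝ) < Real.cosh t := Real.cosh_pos _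
    rw [norm_neg, norm_of_nonneg (by positivity)]
    have e1 : Real.cosh t ≤ Real.exp t := my_cosh_le_exp ht.le
    have e2 : Real.cosh (ν * t) ≤ Real.exp (ν * t) := cosh_mul_le hν ht.le
    have e3 : Real.exp (-x * Real.cosh t) ≤ Real.exp (-(r / 2) * Real.cosh t) := by
      apply Real.exp_le_exp.2
      nlinarith
    calc Real.cosh t * (Real.exp (-x * Real.cosh t) * Real.cosh (ν * t))
        ≤ Real.exp t * (Real.exp (-(r / 2) * Real.cosh t) * Real.exp (ν * t)) := by
          apply mul_le_mul e1 (mul_le_mul e3 e2 h1.le (Real.exp_pos _).le) (by positivity)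
            (Real.exp_pos _).le
      _ = Real.exp (-(r / 2) * Real.cosh t + (ν + 1) * t) := by
          rw [← Real.exp_add, ← Real.exp_add]; ring_nf
  · filter_upwards with t x _
    have h : HasDerivAt (fun x : ℝ => Real.exp (-x * Real.cosh t))
        (-Real.cosh t * Real.exp (-x * Real.cosh t)) x := by
      have h0 : HasDerivAt (fun x : ℝ => -x * Real.cosh t) (-Real.cosh t) x := by
        simpa using ((hasDerivAt_id x).neg.mul_const (Real.cosh t))
      simpa [mul_comm] using h0.exp
    have := h.mul_const (Real.cosh (ν * t))
    convert this using 1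
    · rfl
    ring

lemma besselK0_hasDerivAt {r : ℝ} (hr : 0 < r) :
    HasDerivAt (besselK 0) (-besselK 1 r) r := by
  have h := besselK_hasDerivAt (le_refl 0) hr
  convert h using 1
  rw [besselK, ← integral_neg]
  congr 1
  funext t
  simp [Real.cosh_zero]
  ring

lemma besselK1_hasDerivAt {r : ℝ} (hr : 0 < r) :
    HasDerivAt (besselK 1) (-(1 / 2) * (besselK 0 r + besselK 2 r)) r := by
  have h := besselK_hasDerivAt (by norm_num : (0:ℝ) ≤ 1) hr
  convert h using 1
  have key : ∀ t : ℝ, -(Real.cosh t * (Real.exp (-r * Real.cosh t) * Real.cosh (1 * t)))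
      = (-(1/2)) * (Real.exp (-r * Real.cosh t) * Real.cosh (0 * t))
        + (-(1/2)) * (Real.exp (-r * Real.cosh t) * Real.cosh (2 * t)) := by
    intro t
    simp only [one_mul, zero_mul, Real.cosh_zero, mul_one, Real.cosh_two_mul]
    linear_combination (-(1 / 2) * Real.exp (-r * Real.cosh t)) * Real.cosh_sq t
  rw [show (fun t => -(Real.cosh t * (Real.exp (-r * Real.cosh t) * Real.cosh (1 * t))))
      = fun t => (-(1/2)) * (Real.exp (-r * Real.cosh t) * Real.cosh (0 * t))
        + (-(1/2)) * (Real.exp (-r * Real.cosh t) * Real.cosh (2 * t)) from funext key]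
  rw [integral_add ((integrableOn_besselK (le_refl 0) hr).const_mul _)
      ((integrableOn_besselK (by norm_num : (0:ℝ) ≤ 2) hr).const_mul _),
    integral_const_mul, integral_const_mul]
  rw [besselK, besselK]
  ring

lemma besselK_pos {ν r : ℝ} (hν : 0 ≤ ν) (hr : 0 < r) : 0 < besselK ν r := by
  rw [besselK]
  rw [setIntegral_pos_iff_support_of_nonneg_ae]
  · have hsup : Function.support (fun t => Real.exp (-r * Real.cosh t) * Real.cosh (ν * t))
        ∩ Ioi 0 = Ioi 0 := by
      apply inter_eq_self_of_subset_right
      intro t _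
      exact (mul_pos (Real.exp_pos _) (Real.cosh_pos _)).ne'
    rw [hsup, Real.volume_Ioi]
    exact ENNReal.zero_lt_top
  · filter_upwards with t
    positivity
  · exact integrableOn_besselK hν hr

lemma besselK_CS {r : ℝ} (hr : 0 < r) :
    (besselK 1 r) ^ 2 < (1 / 2) * (besselK 0 r + besselK 2 r) * besselK 0 r := by
  set K0 := besselK 0 r with hK0def
  set K1 := besselK 1 r with hK1def
  set K2 := besselK 2 r with hK2def
  have hK0 : 0 < K0 := besselK_pos (le_refl 0) hr
  set c : ℝ := K1 / K0 with hc
  set h : ℝ → ℝ := fun t => Real.exp (-r * Real.cosh t) * (Real.cosh t - c) ^ 2 with hh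
  have expand : h = fun t =>
      (1 / 2) * (Real.exp (-r * Real.cosh t) * Real.cosh (2 * t))
      + (1 / 2 + c ^ 2) * (Real.exp (-r * Real.cosh t) * Real.cosh (0 * t))
      + (-2 * c) * (Real.exp (-r * Real.cosh t) * Real.cosh (1 * t)) := by
    funext t
    simp only [hh, one_mul, zero_mul, Real.cosh_zero, mul_one, Real.cosh_two_mul]
    linear_combination ((1 / 2) * Real.exp (-r * Real.cosh t)) * Real.cosh_sq t
  have hint : IntegrableOn h (Ioi (0:ℝ)) := by
    rw [expand]
    exact (((integrableOn_besselK (by norm_num) hr).const_mul _).add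
      ((integrableOn_besselK (le_refl 0) hr).const_mul _)).add
      ((integrableOn_besselK (by norm_num) hr).const_mul _)
  have hpos : 0 < ∫ t in Ioi (0:ℝ), h t := by
    rw [setIntegral_pos_iff_support_of_nonneg_ae]
    · have hsub : Ioi (0:ℝ) ⊆ (Function.support h ∩ Ioi 0)
          ∪ {t | t ∈ Ioi (0:ℝ) ∧ Real.cosh t = c} := by
        intro t ht
        by_cases hce : Real.cosh t = c
        · exact Or.inr ⟨ht, hce⟩
        · left
          refine ⟨?_, ht⟩
          simp only [hh, Function.mem_support]
          have hne : Real.cosh t - c ≠ 0 := sub_ne_zero.2 hce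
          positivity
      have hzero : volume {t | t ∈ Ioi (0:ℝ) ∧ Real.cosh t = c} = 0 := by
        apply Set.Subsingleton.measure_zero
        intro x hx y hy
        exact Real.cosh_strictMonoOn.injOn (mem_Ici.2 (le_of_lt hx.1)) (mem_Ici.2 (le_of_lt hy.1))
          (hx.2.trans hy.2.symm)
      by_contra hle
      have hA : volume (Function.support h ∩ Ioi 0) = 0 :=
        le_antisymm (not_lt.mp hle) (zero_le)
      have : volume (Ioi (0:ℝ)) = 0 := by
        refine le_antisymm ?_ (zero_le)
        calc volume (Ioi (0:ℝ)) ≤ volume ((Function.support h ∩ Ioi 0)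
            ∪ {t | t ∈ Ioi (0:ℝ) ∧ Real.cosh t = c}) := measure_mono hsub
          _ ≤ volume (Function.support h ∩ Ioi 0)
              + volume {t | t ∈ Ioi (0:ℝ) ∧ Real.cosh t = c} := measure_union_le _ _
          _ = 0 := by rw [hA, hzero, add_zero]
      rw [Real.volume_Ioi] at this
      exact ENNReal.top_ne_zero this
    · filter_upwards with t
      simp only [hh]
      positivity
    · exact hint
  have hval : ∫ t in Ioi (0:ℝ), h t
      = (1 / 2) * K2 + (1 / 2 + c ^ 2) * K0 + (-2 * c) * K1 := by
    have i2 : IntegrableOn (fun t => (1 / 2 : ℝ) * (Real.exp (-r * Real.cosh t)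
        * Real.cosh (2 * t))) (Ioi (0:ℝ)) :=
      (integrableOn_besselK (show (0:ℝ) ≤ 2 by norm_num) hr).const_mul _
    have i0 : IntegrableOn (fun t => (1 / 2 + c ^ 2) * (Real.exp (-r * Real.cosh t)
        * Real.cosh (0 * t))) (Ioi (0:ℝ)) :=
      (integrableOn_besselK (le_refl (0:ℝ)) hr).const_mul _
    have i1 : IntegrableOn (fun t => (-2 * c) * (Real.exp (-r * Real.cosh t)
        * Real.cosh (1 * t))) (Ioi (0:ℝ)) :=
      (integrableOn_besselK (show (0:ℝ) ≤ 1 by norm_num) hr).const_mul _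
    have step : ∫ t in Ioi (0:ℝ), h t = ∫ t in Ioi (0:ℝ),
        ((1 / 2) * (Real.exp (-r * Real.cosh t) * Real.cosh (2 * t))
        + (1 / 2 + c ^ 2) * (Real.exp (-r * Real.cosh t) * Real.cosh (0 * t))
        + (-2 * c) * (Real.exp (-r * Real.cosh t) * Real.cosh (1 * t))) := by
      rw [expand]
    have i20 : IntegrableOn (fun t => (1 / 2 : ℝ) * (Real.exp (-r * Real.cosh t)
        * Real.cosh (2 * t)) + (1 / 2 + c ^ 2) * (Real.exp (-r * Real.cosh t)
        * Real.cosh (0 * t))) (Ioi (0:ℝ)) := i2.add i0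
    rw [step, integral_add i20 i1, integral_add i2 i0,
      integral_const_mul, integral_const_mul, integral_const_mul]
    rw [hK0def, hK1def, hK2def, besselK, besselK, besselK]
  rw [hval] at hpos
  rw [hc] at hpos
  have key : (1 / 2) * K2 + (1 / 2 + (K1 / K0) ^ 2) * K0 + (-2 * (K1 / K0)) * K1
      = ((1 / 2) * (K0 + K2) * K0 - K1 ^ 2) / K0 := by
    field_simp
    ring
  rw [key] at hpos
  have := mul_pos hpos hK0
  rw [div_mul_cancel₀ _ hK0.ne'] at this
  linarith

lemma ratio_hasDerivAt {r : ℝ} (hr : 0 < r) :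
    HasDerivAt (fun r => besselK 1 r / besselK 0 r)
      ((-(1 / 2) * (besselK 0 r + besselK 2 r) * besselK 0 r - besselK 1 r * (-besselK 1 r))
        / (besselK 0 r) ^ 2) r :=
  (besselK1_hasDerivAt hr).div (besselK0_hasDerivAt hr) (besselK_pos (le_refl 0) hr).ne'

theorem besselK_ratio_strictly_decreasing :
    (∀ r : ℝ, 0 < r →
      (besselK 1 r)^2 - (1/2) * besselK 2 r * besselK 0 r
        - (1/2) * (besselK 0 r)^2 < 0) ∧
    StrictAntiOn (fun r => besselK 1 r / besselK 0 r) (Set.Ioi 0) ∧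
    (∀ a uf : ℝ, uf < a → ∀ r ∈ Set.Ioi (0:ℝ),
      deriv (fun r => (a - uf) * besselK 1 r / besselK 0 r) r < 0) := by
  refine ⟨fun r hr => by nlinarith [besselK_CS hr], ?_, ?_⟩
  · apply strictAntiOn_of_deriv_neg (convex_Ioi 0)
    · intro x hx
      exact ((ratio_hasDerivAt (mem_Ioi.1 hx)).differentiableAt.continuousAt).continuousWithinAt
    · rw [interior_Ioi]
      intro x hx
      rw [(ratio_hasDerivAt (mem_Ioi.1 hx)).deriv]
      apply div_neg_of_neg_of_pos
      · nlinarith [besselK_CS (mem_Ioi.1 hx)]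
      · exact pow_pos (besselK_pos (le_refl 0) (mem_Ioi.1 hx)) 2
  · intro a uf hauf r hr
    rw [mem_Ioi] at hr
    have hder : HasDerivAt (fun r => (a - uf) * besselK 1 r / besselK 0 r)
        (((a - uf) * (-(1 / 2) * (besselK 0 r + besselK 2 r)) * besselK 0 r
          - (a - uf) * besselK 1 r * (-besselK 1 r)) / (besselK 0 r) ^ 2) r :=
      ((besselK1_hasDerivAt hr).const_mul (a - uf)).div (besselK0_hasDerivAt hr)
        (besselK_pos (le_refl 0) hr).ne'
    rw [hder.deriv]
    apply div_neg_of_neg_of_pos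
    · have hx : 0 < (1 / 2) * (besselK 0 r + besselK 2 r) * besselK 0 r - (besselK 1 r) ^ 2 := by
        nlinarith [besselK_CS hr]
      nlinarith [mul_pos (sub_pos.2 hauf) hx]
    · exact pow_pos (besselK_pos (le_refl 0) hr) 2
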